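/- Let ρ(r) = r^3(2+r)/(1+2r) and η_2(r) = 4/((1+2r)(2+r)^2). Then -d^2 log ρ(r)/(d log η_2(r))^2 = (2+r)(1+2r)/(6r^2(1+r)) for all r > 0, and in particular this quantity is strictly positive. -/

import Mathlib

open Real Filter

lemma deriv_lrho (x : ℝ) (hx : 0 < x) :
    deriv (fun y : ℝ => Real.log (y ^ 3 * (2 + y) / (1 + 2 * y))) x
      = 6 * (1 + x) ^ 2 / (x * (2 + x) * (1 + 2 * x)) := by
  have h1 : (0:ℝ) < 1 + 2 * x := by linarith
  have h2 : (0:ℝ) < 2 + x := by linarith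
  have hn : HasDerivAt (fun y : ℝ => y ^ 3 * (2 + y)) (3 * x ^ 2 * (2 + x) + x ^ 3) x := by
    have := (hasDerivAt_pow 3 x).mul ((hasDerivAt_const x (2:ℝ)).add (hasDerivAt_id x))
    refine this.congr_deriv ?_
    simp only [Pi.add_apply, id]; norm_num
  have hd : HasDerivAt (fun y : ℝ => 1 + 2 * y) 2 x := by
    have := (hasDerivAt_const x (1:ℝ)).add ((hasDerivAt_id x).const_mul (2:ℝ))
    exact this.congr_deriv (by norm_num)
  have hf := hn.div hd h1.ne'
  have hne : x ^ 3 * (2 + x) / (1 + 2 * x) ≠ 0 := by positivity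
  have := (hf.log hne).deriv
  simp only [Pi.div_apply] at this; rw [this]
  field_simp
  ring

lemma deriv_leta (x : ℝ) (hx : 0 < x) :
    deriv (fun y : ℝ => Real.log (4 / ((1 + 2 * y) * (2 + y) ^ 2))) x
      = -(6 * (1 + x)) / ((1 + 2 * x) * (2 + x)) := by
  have h1 : (0:ℝ) < 1 + 2 * x := by linarith
  have h2 : (0:ℝ) < 2 + x := by linarith
  have hd : HasDerivAt (fun y : ℝ => (1 + 2 * y) * (2 + y) ^ 2)
      (2 * (2 + x) ^ 2 + (1 + 2 * x) * (2 * (2 + x))) x := by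
    have hb : HasDerivAt (fun y : ℝ => (2 + y) ^ 2) (2 * (2 + x)) x := by
      have := ((hasDerivAt_const x (2:ℝ)).add (hasDerivAt_id x)).pow 2
      refine this.congr_deriv ?_
      simp only [Pi.add_apply, id]; norm_num
    have ha : HasDerivAt (fun y : ℝ => 1 + 2 * y) 2 x := by
      have := (hasDerivAt_const x (1:ℝ)).add ((hasDerivAt_id x).const_mul (2:ℝ))
      exact this.congr_deriv (by norm_num)
    exact ha.mul hb
  have hden : (1 + 2 * x) * (2 + x) ^ 2 ≠ 0 := by positivity
  have hf := (hasDerivAt_const x (4:ℝ)).div hd hden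
  have hne : 4 / ((1 + 2 * x) * (2 + x) ^ 2) ≠ 0 := by positivity
  have := (hf.log hne).deriv
  simp only [Pi.div_apply] at this; rw [this]
  field_simp
  ring

theorem stmt_13 (r : ℝ) (hr : 0 < r) :
    let ρ : ℝ → ℝ := fun r => r ^ 3 * (2 + r) / (1 + 2 * r)
    let η₂ : ℝ → ℝ := fun r => 4 / ((1 + 2 * r) * (2 + r) ^ 2)
    let lρ : ℝ → ℝ := fun r => Real.log (ρ r)
    let lη : ℝ → ℝ := fun r => Real.log (η₂ r)
    let M : ℝ → ℝ := fun r => deriv lρ r / deriv lη r;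
    (-(deriv M r / deriv lη r) = (2 + r) * (1 + 2 * r) / (6 * r ^ 2 * (1 + r)) ∧
      0 < (2 + r) * (1 + 2 * r) / (6 * r ^ 2 * (1 + r))) := by
  intro ρ η₂ lρ lη M
  have h1 : (0:ℝ) < 1 + 2 * r := by linarith
  have h2 : (0:ℝ) < 2 + r := by linarith
  have hMeq : M =ᶠ[nhds r] fun x => -((1 + x) / x) := by
    filter_upwards [eventually_gt_nhds hr] with x hx
    have hx1 : (0:ℝ) < 1 + 2 * x := by linarith
    have hx2 : (0:ℝ) < 2 + x := by linarith
    have hx3 : (0:ℝ) < 1 + x := by linarith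
    show deriv lρ x / deriv lη x = -((1 + x) / x)
    rw [show deriv lρ x = 6 * (1 + x) ^ 2 / (x * (2 + x) * (1 + 2 * x)) from deriv_lrho x hx,
        show deriv lη x = -(6 * (1 + x)) / ((1 + 2 * x) * (2 + x)) from deriv_leta x hx]
    field_simp
  have hM : deriv M r = 1 / r ^ 2 := by
    have h : HasDerivAt (fun x : ℝ => -((1 + x) / x)) (1 / r ^ 2) r := by
      have := (((hasDerivAt_const r (1:ℝ)).add (hasDerivAt_id r)).div (hasDerivAt_id r) hr.ne').neg
      refine this.congr_deriv ?_
      simp only [Pi.add_apply, id]; field_simp; ring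
    rw [hMeq.deriv_eq, h.deriv]
  constructor
  · rw [hM, show deriv lη r = -(6 * (1 + r)) / ((1 + 2 * r) * (2 + r)) from deriv_leta r hr]
    have hr3 : (0:ℝ) < 1 + r := by linarith
    field_simp
  · positivity
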